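/- Let h : ℂ → ℂ be holomorphic on ℂ \ {0} and let λ ∈ ℂ with 0 < |λ| < 1. If h(λz) = h(z) for all z ≠ 0, then h is constant on ℂ \ {0}, i.e., h(z) = h(w) for all nonzero z, w. -/

import Mathlib

/-- If `h` is holomorphic on `ℂ \ {0}` and `h(λ z) = h z` for all `z ≠ 0`, where
`0 < |λ| < 1`, then `h` is constant on `ℂ \ {0}`. -/
theorem stmt_2 (h : ℂ → ℂ) (lam : ℂ)
    (hh : DifferentiableOn ℂ h {(0 : ℂ)}ᶜ)
    (hlam0 : 0 < ‖lam‖) (hlam1 : ‖lam‖ < 1)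
    (hinv : ∀ z : ℂ, z ≠ 0 → h (lam * z) = h z) :
    ∀ z w : ℂ, z ≠ 0 → w ≠ 0 → h z = h w := by
  set r : ℝ := ‖lam‖ with hr
  have hlamne : lam ≠ 0 := norm_ne_zero_iff.mp (ne_of_gt hlam0)
  -- invariance under integer powers of lam
  have hzpow : ∀ n : ℤ, ∀ z : ℂ, z ≠ 0 → h (lam ^ n * z) = h z := by
    intro n
    induction n using Int.induction_on with
    | zero => intro z hz; simp
    | succ k ih =>
      intro z hz
      have h1 : lam ^ ((k : ℤ) + 1) * z = lam * (lam ^ (k : ℤ) * z) := by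
        rw [zpow_add_one₀ hlamne]; ring
      rw [h1, hinv _ (mul_ne_zero (zpow_ne_zero _ hlamne) hz), ih z hz]
    | pred k ih =>
      intro z hz
      have hne : lam ^ (-(k : ℤ) - 1) * z ≠ 0 :=
        mul_ne_zero (zpow_ne_zero _ hlamne) hz
      have h1 : lam * (lam ^ (-(k : ℤ) - 1) * z) = lam ^ (-(k : ℤ)) * z := by
        rw [show (-(k : ℤ)) = (-(k : ℤ) - 1) + 1 by ring, zpow_add_one₀ hlamne]; ring
      have := hinv _ hne
      rw [h1] at this
      rw [← this]
      exact ih z hz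
  -- compact annulus
  set A : Set ℂ := (norm : ℂ → ℝ) ⁻¹' Set.Icc r 1 with hA
  have hAsub : A ⊆ {(0 : ℂ)}ᶜ := by
    intro z hz
    simp only [Set.mem_compl_iff, Set.mem_singleton_iff]
    intro e
    rw [e] at hz
    simp only [hA, Set.mem_preimage, norm_zero, Set.mem_Icc] at hz
    linarith [hz.1]
  have hAcomp : IsCompact A := by
    apply Metric.isCompact_of_isClosed_isBounded
    · exact IsClosed.preimage continuous_norm isClosed_Icc
    · apply Bornology.IsBounded.subset (Metric.isBounded_closedBall (x := (0:ℂ)) (r := 1))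
      intro z hz
      simp only [hA, Set.mem_preimage, Set.mem_Icc] at hz
      simpa [Complex.dist_eq] using hz.2
  obtain ⟨C, hC⟩ := hAcomp.exists_bound_of_continuousOn
    ((hh.continuousOn).mono hAsub)
  -- bound h on all of ℂ \ {0}
  have hbound : ∀ z : ℂ, z ≠ 0 → ‖h z‖ ≤ C := by
    intro z hz
    have habs : 0 < ‖z‖ := by
      simpa [norm_pos_iff] using hz
    have hrinv : 1 < r⁻¹ := (one_lt_inv₀ hlam0).2 hlam1
    obtain ⟨n, hn1, hn2⟩ := exists_mem_Ico_zpow habs hrinv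
    have hw : lam ^ (n + 1) * z ∈ A := by
      have h1 : ‖lam ^ (n + 1) * z‖ = r ^ (n + 1) * ‖z‖ := by
        rw [norm_mul, norm_zpow]
      have hrpos : (0:ℝ) < r := hlam0
      have hpow : ∀ m : ℤ, (r⁻¹) ^ m = (r ^ m)⁻¹ := fun m => by
        rw [inv_zpow]
      simp only [hA, Set.mem_preimage, Set.mem_Icc, h1]
      constructor
      · -- r ≤ r^(n+1) * |z|, from r⁻¹^n ≤ |z|
        rw [hpow] at hn1
        have := mul_le_mul_of_nonneg_left hn1 (le_of_lt (zpow_pos hrpos (n+1)))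
        calc r = r ^ (n+1) * (r ^ n)⁻¹ := by
                  rw [zpow_add_one₀ (ne_of_gt hrpos)]
                  field_simp
             _ ≤ r ^ (n+1) * ‖z‖ := this
      · rw [hpow] at hn2
        have := mul_lt_mul_of_pos_left hn2 (zpow_pos hrpos (n+1))
        have h2 : r ^ (n+1) * (r ^ (n+1))⁻¹ = 1 := by
          field_simp
        linarith [this, h2.le]
    have := hC _ hw
    rwa [hzpow (n+1) z hz] at this
  have hC0 : 0 ≤ C := le_trans (norm_nonneg _) (hbound 1 one_ne_zero)
  -- removable singularity
  set L : ℂ := Filter.limUnder (nhdsWithin 0 {(0:ℂ)}ᶜ) h with hL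
  set H : ℂ → ℂ := Function.update h 0 L with hH
  have hHdiff : Differentiable ℂ H := by
    rw [← differentiableOn_univ]
    apply Complex.differentiableOn_update_limUnder_of_bddAbove (Filter.univ_mem)
    · exact hh.mono (by intro z hz; exact hz.2)
    · refine ⟨C, ?_⟩
      rintro x ⟨z, hz, rfl⟩
      exact hbound z hz.2
  have hHh : ∀ z : ℂ, z ≠ 0 → H z = h z := fun z hz => Function.update_of_ne hz _ _
  -- bound on L
  have htend : Filter.Tendsto h (nhdsWithin 0 {(0:ℂ)}ᶜ) (nhds L) := by
    have h1 : Filter.Tendsto H (nhdsWithin 0 {(0:ℂ)}ᶜ) (nhds (H 0)) :=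
      (hHdiff.continuous.continuousAt.tendsto).mono_left nhdsWithin_le_nhds
    have h2 : H 0 = L := Function.update_self _ _ _
    rw [h2] at h1
    refine h1.congr' ?_
    filter_upwards [self_mem_nhdsWithin] with z hz
    exact hHh z hz
  have hLbound : ‖L‖ ≤ C := by
    have : ∀ᶠ z in nhdsWithin (0:ℂ) {(0:ℂ)}ᶜ, ‖h z‖ ≤ C := by
      filter_upwards [self_mem_nhdsWithin] with z hz using hbound z hz
    exact le_of_tendsto (htend.norm) this
  -- Liouville
  have hrange : Bornology.IsBounded (Set.range H) := by
    rw [isBounded_iff_forall_norm_le]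
    refine ⟨C, ?_⟩
    rintro x ⟨w, rfl⟩
    by_cases hw : w = 0
    · rw [hw]; simpa [hH] using hLbound
    · rw [hHh w hw]; exact hbound w hw
  intro z w hz hw
  have := hHdiff.apply_eq_apply_of_bounded hrange z w
  rwa [hHh z hz, hHh w hw] at this
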